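/- arXiv:2310.11907 — 2 statements merged into one kernel-verified Lean document; each statement's English description precedes it below -/
import Mathlib

section
/- Let Γ be a signed graph of order m+1 and let v be a vertex of Γ with negative degree d_v⁻ = 0 (no negative edge is incident to v). Let Γ' = Γ − v be the signed graph of order m obtained by deleting v together with its incident edges. If (α_1, α_2, …, α_{m+1}) and (β_1, β_2, …, β_m) are the ordered net-Laplacian spectra of Γ and Γ' respectively, then α_p − 1 ≤ β_p ≤ α_{p+1} for every p = 1, 2, …, m. -/
open Polynomial

/-- A signed adjacency matrix: symmetric, zero diagonal, entries in {-1,0,1}. -/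
def IsSignedAdj {n : ℕ} (A : Matrix (Fin n) (Fin n) ℝ) : Prop :=
  A.IsSymm ∧ (∀ i, A i i = 0) ∧ ∀ i j, A i j = -1 ∨ A i j = 0 ∨ A i j = 1

/-- Degree of vertex `i`: number of neighbours. -/
noncomputable def deg {n : ℕ} (A : Matrix (Fin n) (Fin n) ℝ) (i : Fin n) : ℕ :=
  {j | A i j ≠ 0}.ncard

/-- Negative degree of vertex `i`. -/
noncomputable def negDeg {n : ℕ} (A : Matrix (Fin n) (Fin n) ℝ) (i : Fin n) : ℕ :=
  {j | A i j = -1}.ncard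

/-- Positive degree of vertex `i`. -/
noncomputable def posDeg {n : ℕ} (A : Matrix (Fin n) (Fin n) ℝ) (i : Fin n) : ℕ :=
  {j | A i j = 1}.ncard

/-- Laplacian matrix `L = D - A`. -/
noncomputable def lap {n : ℕ} (A : Matrix (Fin n) (Fin n) ℝ) : Matrix (Fin n) (Fin n) ℝ :=
  Matrix.diagonal (fun i => (deg A i : ℝ)) - A

/-- Net-Laplacian matrix `N = D± - A`, where `D±` is the diagonal of signed degrees. -/
noncomputable def netLap {n : ℕ} (A : Matrix (Fin n) (Fin n) ℝ) : Matrix (Fin n) (Fin n) ℝ :=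
  Matrix.diagonal (fun i => ∑ j, A i j) - A

/-- Normalized net-Laplacian `D^{-1/2} N D^{-1/2}`. -/
noncomputable def normNetLap {n : ℕ} (A : Matrix (Fin n) (Fin n) ℝ) :
    Matrix (Fin n) (Fin n) ℝ :=
  Matrix.diagonal (fun i => (Real.sqrt (deg A i))⁻¹) * netLap A *
    Matrix.diagonal (fun i => (Real.sqrt (deg A i))⁻¹)

/-- `μ` is the ordered (non-decreasing) spectrum of `M` : it is monotone and lists the
eigenvalues of `M` with multiplicity, i.e. the characteristic polynomial splits as
`∏ (X - μ i)`. -/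
def IsOrderedSpectrum {n : ℕ} (M : Matrix (Fin n) (Fin n) ℝ) (μ : Fin n → ℝ) : Prop :=
  Monotone μ ∧ M.charpoly = ∏ i, (X - C (μ i))

/-- Deleting the edge `uv`: set the `(u,v)` and `(v,u)` entries to `0`. -/
def deleteEdge {n : ℕ} (A : Matrix (Fin n) (Fin n) ℝ) (u v : Fin n) :
    Matrix (Fin n) (Fin n) ℝ :=
  Matrix.of fun i j => if (i = u ∧ j = v) ∨ (i = v ∧ j = u) then 0 else A i j

/-- Deleting the vertex `v`: principal submatrix omitting row/column `v`. -/
def deleteVertex {n : ℕ} (A : Matrix (Fin (n+1)) (Fin (n+1)) ℝ) (v : Fin (n+1)) :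
    Matrix (Fin n) (Fin n) ℝ :=
  A.submatrix v.succAbove v.succAbove

section Aux

open Matrix Finset Module Submodule

/-- Characteristic polynomial is invariant under conjugation. -/
lemma my_charpoly_conj {n : ℕ} (V W D : Matrix (Fin n) (Fin n) ℝ)
    (hVW : V * W = 1) (hWV : W * V = 1) :
    (V * D * W).charpoly = D.charpoly := by
  classical
  set f : Matrix (Fin n) (Fin n) ℝ →+* Matrix (Fin n) (Fin n) ℝ[X] :=
    (C : ℝ →+* ℝ[X]).mapMatrix with hf
  have key : f V * charmatrix D * f W = charmatrix (V * D * W) := by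
    unfold charmatrix
    rw [mul_sub, sub_mul]
    congr 1
    · have hcomm : f V * Matrix.scalar (Fin n) (X : ℝ[X]) =
          Matrix.scalar (Fin n) (X : ℝ[X]) * f V :=
        (Matrix.scalar_commute (X : ℝ[X]) (fun r => Commute.all _ _) (f V)).symm
      rw [hcomm, mul_assoc, ← _root_.map_mul, hVW, _root_.map_one f, mul_one]
    · rw [← _root_.map_mul, ← _root_.map_mul]
  have hdet : (f V).det * (f W).det = 1 := by
    rw [← det_mul, ← _root_.map_mul, hVW, _root_.map_one f, det_one]
  calc (V * D * W).charpoly = (charmatrix (V * D * W)).det := rfl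
    _ = (f V * charmatrix D * f W).det := by rw [key]
    _ = (f V).det * (f W).det * (charmatrix D).det := by rw [det_mul, det_mul]; ring
    _ = D.charpoly := by rw [hdet, one_mul]; rfl

lemma my_charpoly_diagonal {n : ℕ} (d : Fin n → ℝ) :
    (Matrix.diagonal d).charpoly = ∏ i, (X - C (d i)) := by
  classical
  have h : charmatrix (Matrix.diagonal d) = Matrix.diagonal (fun i => X - C (d i)) := by
    ext i j
    by_cases hij : i = j
    · subst hij; simp
    · rw [charmatrix_apply_ne _ _ _ hij, Matrix.diagonal_apply_ne _ hij,
        Matrix.diagonal_apply_ne _ hij, map_zero, neg_zero]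
  rw [Matrix.charpoly, h, Matrix.det_diagonal]

lemma my_charpoly_eq_prod_eigenvalues {n : ℕ} {M : Matrix (Fin n) (Fin n) ℝ}
    (hM : M.IsHermitian) :
    M.charpoly = ∏ i, (X - C (hM.eigenvalues i)) := by
  classical
  have hsp := hM.spectral_theorem
  set U := (hM.eigenvectorUnitary : Matrix (Fin n) (Fin n) ℝ) with hU
  have h1 : U * star U = 1 := Unitary.mul_star_self_of_mem hM.eigenvectorUnitary.2
  have h2 : star U * U = 1 := Unitary.star_mul_self_of_mem hM.eigenvectorUnitary.2
  have hdiag : (RCLike.ofReal ∘ hM.eigenvalues : Fin n → ℝ) = hM.eigenvalues := by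
    funext i; simp
  calc M.charpoly
      = (U * Matrix.diagonal (RCLike.ofReal ∘ hM.eigenvalues) * star U).charpoly := by
        conv_lhs => rw [hsp, Unitary.conjStarAlgAut_apply]
    _ = (Matrix.diagonal (RCLike.ofReal ∘ hM.eigenvalues)).charpoly :=
        my_charpoly_conj U (star U) _ h1 h2
    _ = ∏ i, (X - C (hM.eigenvalues i)) := by rw [hdiag, my_charpoly_diagonal]

lemma my_multiset_eq {n : ℕ} {M : Matrix (Fin n) (Fin n) ℝ} (hM : M.IsHermitian)
    {μ : Fin n → ℝ} (hμ : M.charpoly = ∏ i, (X - C (μ i))) :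
    Multiset.map μ Finset.univ.val = Multiset.map hM.eigenvalues Finset.univ.val := by
  classical
  have key : ∀ f : Fin n → ℝ,
      (∏ i, (X - C (f i))).roots = Multiset.map f Finset.univ.val := by
    intro f
    have : ∏ i, (X - C (f i)) =
        ((Multiset.map f Finset.univ.val).map fun a => X - C a).prod := by
      rw [Multiset.map_map, Finset.prod_eq_multiset_prod]; rfl
    rw [this, Polynomial.roots_multiset_prod_X_sub_C]
  have := congrArg Polynomial.roots (hμ.symm.trans (my_charpoly_eq_prod_eigenvalues hM))
  rw [key μ, key hM.eigenvalues] at this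
  exact this

lemma my_card_filter_le {n : ℕ} {μ eigs : Fin n → ℝ}
    (hmul : Multiset.map μ Finset.univ.val = Multiset.map eigs Finset.univ.val)
    (hmono : Monotone μ) (k : Fin n) :
    (k : ℕ) + 1 ≤ (Finset.univ.filter fun i => eigs i ≤ μ k).card := by
  classical
  have h1 : (Finset.univ.filter fun i => eigs i ≤ μ k).card
      = Multiset.countP (fun r => r ≤ μ k) (Multiset.map eigs Finset.univ.val) := by
    rw [Multiset.countP_map]
    rfl
  have h2 : (Finset.univ.filter fun i => μ i ≤ μ k).card
      = Multiset.countP (fun r => r ≤ μ k) (Multiset.map μ Finset.univ.val) := by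
    rw [Multiset.countP_map]
    rfl
  rw [h1, ← hmul, ← h2]
  calc (k : ℕ) + 1 = (Finset.Iic k).card := (Fin.card_Iic k).symm
    _ ≤ _ := Finset.card_le_card (by
        intro i hi
        simp only [Finset.mem_Iic] at hi
        simp only [Finset.mem_filter, Finset.mem_univ, true_and]
        exact hmono hi)

lemma my_card_filter_ge {n : ℕ} {μ eigs : Fin n → ℝ}
    (hmul : Multiset.map μ Finset.univ.val = Multiset.map eigs Finset.univ.val)
    (hmono : Monotone μ) (k : Fin n) :
    n - (k : ℕ) ≤ (Finset.univ.filter fun i => μ k ≤ eigs i).card := by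
  classical
  have h1 : (Finset.univ.filter fun i => μ k ≤ eigs i).card
      = Multiset.countP (fun r => μ k ≤ r) (Multiset.map eigs Finset.univ.val) := by
    rw [Multiset.countP_map]; rfl
  have h2 : (Finset.univ.filter fun i => μ k ≤ μ i).card
      = Multiset.countP (fun r => μ k ≤ r) (Multiset.map μ Finset.univ.val) := by
    rw [Multiset.countP_map]; rfl
  rw [h1, ← hmul, ← h2]
  calc n - (k : ℕ) = (Finset.Ici k).card := (Fin.card_Ici k).symm
    _ ≤ _ := Finset.card_le_card (by
        intro i hi
        simp only [Finset.mem_Ici] at hi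
        simp only [Finset.mem_filter, Finset.mem_univ, true_and]
        exact hmono hi)


lemma my_eigen_data {n : ℕ} {M : Matrix (Fin n) (Fin n) ℝ} (hM : M.IsHermitian) :
    ∃ u : Fin n → (Fin n → ℝ),
      (∀ i j, u i ⬝ᵥ u j = if i = j then 1 else 0) ∧
      ∀ i, M *ᵥ u i = hM.eigenvalues i • u i := by
  classical
  refine ⟨fun i => ⇑(hM.eigenvectorBasis i), ?_, hM.mulVec_eigenvectorBasis⟩
  intro i j
  have h := (orthonormal_iff_ite (𝕜 := ℝ)).mp hM.eigenvectorBasis.orthonormal i j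
  rw [PiLp.inner_apply] at h
  simpa [dotProduct, RCLike.inner_apply, conj_trivial, mul_comm] using h


lemma my_sum_dotProduct {ι : Type*} {n : ℕ} (s : Finset ι) (f : ι → (Fin n → ℝ))
    (w : Fin n → ℝ) : (∑ j ∈ s, f j) ⬝ᵥ w = ∑ j ∈ s, f j ⬝ᵥ w := by
  simp only [dotProduct, Finset.sum_apply, Finset.sum_mul]
  exact Finset.sum_comm

lemma my_dotProduct_sum {ι : Type*} {n : ℕ} (s : Finset ι) (w : Fin n → ℝ)
    (f : ι → (Fin n → ℝ)) : w ⬝ᵥ (∑ j ∈ s, f j) = ∑ j ∈ s, w ⬝ᵥ f j := by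
  simp only [dotProduct, Finset.sum_apply, Finset.mul_sum]
  exact Finset.sum_comm

lemma my_span_quad {n : ℕ} {M : Matrix (Fin n) (Fin n) ℝ} {u : Fin n → (Fin n → ℝ)}
    (hu : ∀ i j, u i ⬝ᵥ u j = if i = j then 1 else 0)
    {eigs : Fin n → ℝ} (hMu : ∀ i, M *ᵥ u i = eigs i • u i)
    (S : Finset (Fin n)) :
    ∃ U : Submodule ℝ (Fin n → ℝ), S.card ≤ finrank ℝ U ∧
      ∀ x ∈ U, ∃ c : ↥S → ℝ,
        x ⬝ᵥ x = ∑ j, c j ^ 2 ∧ x ⬝ᵥ (M *ᵥ x) = ∑ j : ↥S, eigs j.1 * c j ^ 2 := by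
  classical
  set w : ↥S → (Fin n → ℝ) := fun i => u i with hw
  have key : ∀ c d : ↥S → ℝ, (∑ j, c j • w j) ⬝ᵥ (∑ j, d j • w j) = ∑ j, c j * d j := by
    intro c d
    rw [my_sum_dotProduct]
    refine Finset.sum_congr rfl fun j _ => ?_
    rw [smul_dotProduct, my_dotProduct_sum]
    have : ∀ l : ↥S, w j ⬝ᵥ (d l • w l) = if j = l then d l else 0 := by
      intro l
      rw [dotProduct_smul, hw]
      simp only [hu, smul_eq_mul, mul_ite, mul_one, mul_zero, Subtype.coe_inj]
    simp only [this, Finset.sum_ite_eq, Finset.mem_univ, if_true, smul_eq_mul]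
  have hind : LinearIndependent ℝ w := by
    rw [Fintype.linearIndependent_iff]
    intro g hg i
    have h0 := key g (fun l => if l = i then 1 else 0)
    rw [hg, zero_dotProduct] at h0
    simpa using h0.symm
  refine ⟨Submodule.span ℝ (Set.range w), ?_, ?_⟩
  · rw [finrank_span_eq_card hind, Fintype.card_coe]
  · intro x hx
    obtain ⟨c, rfl⟩ := (mem_span_range_iff_exists_fun ℝ).mp hx
    refine ⟨c, ?_, ?_⟩
    · rw [key]; exact Finset.sum_congr rfl fun j _ => (sq (c j)).symm
    · have hMx : M *ᵥ (∑ j, c j • w j) = ∑ j, (c j * eigs j) • w j := by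
        rw [← M.mulVecLin_apply, map_sum]
        refine Finset.sum_congr rfl fun j _ => ?_
        rw [LinearMap.map_smul, Matrix.mulVecLin_apply, hw]
        simp only [hMu, smul_smul]
      rw [hMx, key]
      exact Finset.sum_congr rfl fun j _ => by ring


lemma my_comap_finrank {n m : ℕ} (ι : (Fin n → ℝ) →ₗ[ℝ] (Fin m → ℝ))
    (hinj : Function.Injective ι) (U : Submodule ℝ (Fin m → ℝ)) :
    finrank ℝ U + n ≤ finrank ℝ (Submodule.comap ι U) + m := by
  have h1 : finrank ℝ (Submodule.comap ι U)
      = finrank ℝ ↥(LinearMap.range ι ⊓ U) := by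
    rw [← Submodule.map_comap_eq]
    exact (Submodule.equivMapOfInjective ι hinj _).finrank_eq
  have h2 := Submodule.finrank_sup_add_finrank_inf_eq (LinearMap.range ι) U
  have h3 : finrank ℝ (LinearMap.range ι) = n := by
    rw [LinearMap.finrank_range_of_inj hinj, Module.finrank_pi]
    simp
  have h4 : finrank ℝ ↥(LinearMap.range ι ⊔ U) ≤ m := by
    have := Submodule.finrank_le (LinearMap.range ι ⊔ U)
    rwa [Module.finrank_pi, Fintype.card_fin] at this
  omega

lemma my_inf_nontrivial {N : ℕ} (U V : Submodule ℝ (Fin N → ℝ))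
    (h : N < finrank ℝ U + finrank ℝ V) :
    ∃ x, x ∈ U ∧ x ∈ V ∧ x ≠ 0 := by
  have h2 := Submodule.finrank_sup_add_finrank_inf_eq U V
  have h4 : finrank ℝ ↥(U ⊔ V) ≤ N := by
    have := Submodule.finrank_le (U ⊔ V)
    rwa [Module.finrank_pi, Fintype.card_fin] at this
  have hpos : 0 < finrank ℝ ↥(U ⊓ V) := by omega
  have hne : U ⊓ V ≠ ⊥ := by
    intro hbot
    rw [hbot, finrank_bot] at hpos
    exact lt_irrefl 0 hpos
  obtain ⟨x, hx, hx0⟩ := Submodule.exists_mem_ne_zero_of_ne_bot hne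
  exact ⟨x, hx.1, hx.2, hx0⟩

lemma my_dot_pos {n : ℕ} {x : Fin n → ℝ} (hx : x ≠ 0) : 0 < x ⬝ᵥ x := by
  have hnn : 0 ≤ x ⬝ᵥ x := Finset.sum_nonneg fun i _ => mul_self_nonneg (x i)
  rcases lt_or_eq_of_le hnn with h | h
  · exact h
  · exact absurd (dotProduct_self_eq_zero.mp h.symm) hx



lemma my_spec_low {n : ℕ} {M : Matrix (Fin n) (Fin n) ℝ} (hM : M.IsHermitian)
    {μ : Fin n → ℝ} (hspec : IsOrderedSpectrum M μ) (k : Fin n) :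
    ∃ U : Submodule ℝ (Fin n → ℝ), (k : ℕ) + 1 ≤ finrank ℝ U ∧
      ∀ x ∈ U, x ⬝ᵥ (M *ᵥ x) ≤ μ k * (x ⬝ᵥ x) := by
  classical
  obtain ⟨u, hu, hMu⟩ := my_eigen_data hM
  have hmul := my_multiset_eq hM hspec.2
  set S : Finset (Fin n) := Finset.univ.filter fun i => hM.eigenvalues i ≤ μ k with hS
  obtain ⟨U, hdim, hq⟩ := my_span_quad hu hMu S
  refine ⟨U, le_trans (my_card_filter_le hmul hspec.1 k) hdim, ?_⟩
  intro x hx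
  obtain ⟨c, hxx, hxM⟩ := hq x hx
  rw [hxx, hxM, Finset.mul_sum]
  refine Finset.sum_le_sum fun j _ => ?_
  have hj : hM.eigenvalues j.1 ≤ μ k := (Finset.mem_filter.mp j.2).2
  exact mul_le_mul_of_nonneg_right hj (sq_nonneg _)

lemma my_spec_high {n : ℕ} {M : Matrix (Fin n) (Fin n) ℝ} (hM : M.IsHermitian)
    {μ : Fin n → ℝ} (hspec : IsOrderedSpectrum M μ) (k : Fin n) :
    ∃ V : Submodule ℝ (Fin n → ℝ), n - (k : ℕ) ≤ finrank ℝ V ∧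
      ∀ x ∈ V, μ k * (x ⬝ᵥ x) ≤ x ⬝ᵥ (M *ᵥ x) := by
  classical
  obtain ⟨u, hu, hMu⟩ := my_eigen_data hM
  have hmul := my_multiset_eq hM hspec.2
  set S : Finset (Fin n) := Finset.univ.filter fun i => μ k ≤ hM.eigenvalues i with hS
  obtain ⟨V, hdim, hq⟩ := my_span_quad hu hMu S
  refine ⟨V, le_trans (my_card_filter_ge hmul hspec.1 k) hdim, ?_⟩
  intro x hx
  obtain ⟨c, hxx, hxM⟩ := hq x hx
  rw [hxx, hxM, Finset.mul_sum]
  refine Finset.sum_le_sum fun j _ => ?_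
  have hj : μ k ≤ hM.eigenvalues j.1 := (Finset.mem_filter.mp j.2).2
  exact mul_le_mul_of_nonneg_right hj (sq_nonneg _)

lemma my_interlace {n : ℕ} {M : Matrix (Fin (n+1)) (Fin (n+1)) ℝ}
    {M' : Matrix (Fin n) (Fin n) ℝ}
    (hM : M.IsHermitian) (hM' : M'.IsHermitian)
    {μ : Fin (n+1) → ℝ} {ν : Fin n → ℝ}
    (hμ : IsOrderedSpectrum M μ) (hν : IsOrderedSpectrum M' ν)
    (ι : (Fin n → ℝ) →ₗ[ℝ] (Fin (n+1) → ℝ))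
    (hnorm : ∀ x, ι x ⬝ᵥ ι x = x ⬝ᵥ x)
    (c : ℝ)
    (hlow : ∀ x, ι x ⬝ᵥ (M *ᵥ ι x) - c * (x ⬝ᵥ x) ≤ x ⬝ᵥ (M' *ᵥ x))
    (hhigh : ∀ x, x ⬝ᵥ (M' *ᵥ x) ≤ ι x ⬝ᵥ (M *ᵥ ι x)) :
    ∀ p : Fin n, μ p.castSucc - c ≤ ν p ∧ ν p ≤ μ p.succ := by
  have hinj : Function.Injective ι := by
    rw [injective_iff_map_eq_zero]
    intro x hx
    have := hnorm x
    rw [hx, zero_dotProduct] at this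
    exact dotProduct_self_eq_zero.mp this.symm
  intro p
  constructor
  · -- lower bound : μ p.castSucc - c ≤ ν p
    obtain ⟨U, hUd, hUq⟩ := my_spec_low hM' hν p
    obtain ⟨V, hVd, hVq⟩ := my_spec_high hM hμ p.castSucc
    have hcomap := my_comap_finrank ι hinj V
    obtain ⟨x, hxU, hxV, hx0⟩ := my_inf_nontrivial U (Submodule.comap ι V) (by
      have hp : (p : ℕ) < n := p.2
      have h1 : (p.castSucc : ℕ) = (p : ℕ) := rfl
      omega)
    have hpos := my_dot_pos hx0
    have h1 : μ p.castSucc * (x ⬝ᵥ x) ≤ ι x ⬝ᵥ (M *ᵥ ι x) := by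
      have := hVq (ι x) hxV
      rwa [hnorm] at this
    have h2 : ι x ⬝ᵥ (M *ᵥ ι x) - c * (x ⬝ᵥ x) ≤ ν p * (x ⬝ᵥ x) :=
      le_trans (hlow x) (hUq x hxU)
    have h3 : (μ p.castSucc - c) * (x ⬝ᵥ x) ≤ ν p * (x ⬝ᵥ x) := by nlinarith
    linarith [le_of_mul_le_mul_right (by linarith [h3] : (μ p.castSucc - c) * (x ⬝ᵥ x) ≤ ν p * (x ⬝ᵥ x)) hpos]
  · -- upper bound : ν p ≤ μ p.succ
    obtain ⟨U, hUd, hUq⟩ := my_spec_low hM hμ p.succ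
    obtain ⟨V, hVd, hVq⟩ := my_spec_high hM' hν p
    have hcomap := my_comap_finrank ι hinj U
    obtain ⟨x, hxV, hxU, hx0⟩ := my_inf_nontrivial V (Submodule.comap ι U) (by
      have hp : (p : ℕ) < n := p.2
      have h1 : (p.succ : ℕ) = (p : ℕ) + 1 := rfl
      omega)
    have hpos := my_dot_pos hx0
    have h1 : ν p * (x ⬝ᵥ x) ≤ x ⬝ᵥ (M' *ᵥ x) := hVq x hxV
    have h2 : ι x ⬝ᵥ (M *ᵥ ι x) ≤ μ p.succ * (x ⬝ᵥ x) := by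
      have := hUq (ι x) hxU
      rwa [hnorm] at this
    exact le_of_mul_le_mul_right (by linarith [hhigh x]) hpos


lemma my_isHerm_of_isSymm {n : ℕ} {M : Matrix (Fin n) (Fin n) ℝ} (h : M.IsSymm) :
    M.IsHermitian := by
  unfold Matrix.IsHermitian
  ext i j
  rw [Matrix.conjTranspose_apply, star_trivial]
  exact h.apply i j

lemma my_netLap_isSymm {n : ℕ} {A : Matrix (Fin n) (Fin n) ℝ} (h : A.IsSymm) :
    (netLap A).IsSymm :=
  (Matrix.isSymm_diagonal _).sub h

/-- Linear embedding inserting a zero coordinate at position `v`. -/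
def myEmb {m : ℕ} (v : Fin (m+1)) : (Fin m → ℝ) →ₗ[ℝ] (Fin (m+1) → ℝ) where
  toFun x := v.insertNth 0 x
  map_add' x y := by
    funext j
    refine Fin.succAboveCases v ?_ ?_ j
    · simp
    · intro i; simp
  map_smul' c x := by
    funext j
    refine Fin.succAboveCases v ?_ ?_ j
    · simp
    · intro i; simp

lemma myEmb_norm {m : ℕ} (v : Fin (m+1)) (x : Fin m → ℝ) :
    myEmb v x ⬝ᵥ myEmb v x = x ⬝ᵥ x := by
  show (v.insertNth 0 x) ⬝ᵥ (v.insertNth 0 x) = x ⬝ᵥ x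
  rw [dotProduct,
    Fin.sum_univ_succAbove _ v]
  simp [dotProduct]

lemma myEmb_apply {m : ℕ} (v : Fin (m+1)) (x : Fin m → ℝ) :
    myEmb v x = Fin.insertNth (α := fun _ => ℝ) v 0 x := rfl

lemma my_quad_split {m : ℕ} (A : Matrix (Fin (m+1)) (Fin (m+1)) ℝ) (v : Fin (m+1))
    (x : Fin m → ℝ) :
    myEmb v x ⬝ᵥ (netLap A *ᵥ myEmb v x)
      = x ⬝ᵥ (netLap (deleteVertex A v) *ᵥ x) + ∑ i, A (v.succAbove i) v * x i ^ 2 := by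
  classical
  have hyv : (Fin.insertNth (α := fun _ => ℝ) v 0 x) v = 0 := Fin.insertNth_apply_same (α := fun _ => ℝ) v 0 x
  have hys : ∀ i, (Fin.insertNth (α := fun _ => ℝ) v 0 x) (v.succAbove i) = x i :=
    fun i => Fin.insertNth_apply_succAbove (α := fun _ => ℝ) v 0 x i
  have entry : ∀ i j, netLap A (v.succAbove i) (v.succAbove j)
      = netLap (deleteVertex A v) i j + (if i = j then A (v.succAbove i) v else 0) := by
    intro i j
    by_cases h : i = j
    · subst h
      simp only [netLap, deleteVertex, Matrix.sub_apply, Matrix.diagonal_apply_eq,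
        Matrix.submatrix_apply, eq_self_iff_true, if_true]
      rw [Fin.sum_univ_succAbove _ v]
      ring
    · have hsa : v.succAbove i ≠ v.succAbove j := by
        simpa [Fin.succAbove_right_inj] using h
      simp only [netLap, deleteVertex, Matrix.sub_apply, Matrix.diagonal_apply_ne _ hsa,
        Matrix.diagonal_apply_ne _ h, Matrix.submatrix_apply, if_neg h]
      ring
  have h2 : ∀ i, (netLap A *ᵥ (Fin.insertNth (α := fun _ => ℝ) v 0 x)) (v.succAbove i)
      = ∑ j, netLap A (v.succAbove i) (v.succAbove j) * x j := by
    intro i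
    show ∑ b, netLap A (v.succAbove i) b * (Fin.insertNth (α := fun _ => ℝ) v 0 x) b = _
    rw [Fin.sum_univ_succAbove _ v, hyv]
    simp [hys]
  have h1 : myEmb v x ⬝ᵥ (netLap A *ᵥ myEmb v x)
      = ∑ i, x i * (∑ j, netLap A (v.succAbove i) (v.succAbove j) * x j) := by
    rw [myEmb_apply]
    show ∑ a, (Fin.insertNth (α := fun _ => ℝ) v 0 x) a * (netLap A *ᵥ (Fin.insertNth (α := fun _ => ℝ) v 0 x)) a = _
    rw [Fin.sum_univ_succAbove _ v, hyv]
    simp only [zero_mul, zero_add, hys, h2]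
  have h3 : x ⬝ᵥ (netLap (deleteVertex A v) *ᵥ x)
      = ∑ i, x i * (∑ j, netLap (deleteVertex A v) i j * x j) := rfl
  rw [h1, h3, ← Finset.sum_add_distrib]
  refine Finset.sum_congr rfl fun i _ => ?_
  simp only [entry, add_mul, Finset.sum_add_distrib, ite_mul, zero_mul, mul_add]
  rw [Finset.sum_ite_eq Finset.univ i (fun j => A (v.succAbove i) v * x j)]
  simp only [Finset.mem_univ, if_true]
  ring


/-- deleting a vertex with zero negative degree, the ordered net-Laplacian
spectra satisfy alpha_p - 1 <= beta_p <= alpha_{p+1} for p = 1,...,m. -/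
theorem stmt12 (m : ℕ) (A : Matrix (Fin (m+1)) (Fin (m+1)) ℝ) (hA : IsSignedAdj A)
    (v : Fin (m+1)) (hv : negDeg A v = 0)
    (α : Fin (m+1) → ℝ) (β : Fin m → ℝ)
    (hα : IsOrderedSpectrum (netLap A) α)
    (hβ : IsOrderedSpectrum (netLap (deleteVertex A v)) β) :
    ∀ p : Fin m, α p.castSucc - 1 ≤ β p ∧ β p ≤ α p.succ := by
  classical
  have hsymm : A.IsSymm := hA.1
  have hermM : (netLap A).IsHermitian := my_isHerm_of_isSymm (my_netLap_isSymm hsymm)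
  have hsub : (deleteVertex A v).IsSymm := hsymm.submatrix _
  have hermM' : (netLap (deleteVertex A v)).IsHermitian :=
    my_isHerm_of_isSymm (my_netLap_isSymm hsub)
  have hAv : ∀ j, A v j ≠ -1 := by
    intro j hj
    have h0 : ({j | A v j = -1} : Set (Fin (m+1))) = ∅ :=
      (Set.ncard_eq_zero (Set.toFinite _)).mp hv
    have hmem : j ∈ ({j | A v j = -1} : Set (Fin (m+1))) := hj
    rw [h0] at hmem
    exact Set.notMem_empty j hmem
  have he : ∀ i : Fin m, 0 ≤ A (v.succAbove i) v ∧ A (v.succAbove i) v ≤ 1 := by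
    intro i
    have hs : A (v.succAbove i) v = A v (v.succAbove i) := hsymm.apply v (v.succAbove i)
    rcases hA.2.2 v (v.succAbove i) with h | h | h
    · exact absurd h (hAv _)
    · rw [hs, h]; norm_num
    · rw [hs, h]; norm_num
  have hhigh : ∀ x : Fin m → ℝ, x ⬝ᵥ (netLap (deleteVertex A v) *ᵥ x)
      ≤ myEmb v x ⬝ᵥ (netLap A *ᵥ myEmb v x) := by
    intro x
    rw [my_quad_split]
    have h0 : 0 ≤ ∑ i, A (v.succAbove i) v * x i ^ 2 :=
      Finset.sum_nonneg fun i _ => mul_nonneg (he i).1 (sq_nonneg _)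
    linarith
  have hlow : ∀ x : Fin m → ℝ,
      myEmb v x ⬝ᵥ (netLap A *ᵥ myEmb v x) - 1 * (x ⬝ᵥ x)
        ≤ x ⬝ᵥ (netLap (deleteVertex A v) *ᵥ x) := by
    intro x
    rw [my_quad_split]
    have hdx : x ⬝ᵥ x = ∑ i, x i ^ 2 := by
      simp [dotProduct, sq]
    have h1 : ∑ i, A (v.succAbove i) v * x i ^ 2 ≤ x ⬝ᵥ x := by
      rw [hdx]
      exact Finset.sum_le_sum fun i _ => by nlinarith [(he i).2, sq_nonneg (x i)]
    linarith
  exact my_interlace hermM hermM' hα hβ (myEmb v) (myEmb_norm v) 1 hlow hhigh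

end Aux
end

section
/- Let Γ be a signed graph of order m without isolated vertices (every vertex has degree at least 1). Then every eigenvalue μ of the normalized net-Laplacian N̄(Γ) = D^{−1/2} N(Γ) D^{−1/2} satisfies −2 ≤ μ ≤ 2. -/
open Polynomial

lemma eval_charpoly_eq {m : ℕ} (M : Matrix (Fin m) (Fin m) ℝ) (μ : ℝ) :
    M.charpoly.eval μ = (μ • (1 : Matrix (Fin m) (Fin m) ℝ) - M).det := by
  rw [Matrix.charpoly, ← Polynomial.coe_evalRingHom, RingHom.map_det]
  congr 1
  ext i j
  by_cases h : i = j <;>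
    simp [Matrix.charmatrix_apply, Matrix.one_apply, h, Matrix.smul_apply]

lemma deg_eq_sum_abs {m : ℕ} (A : Matrix (Fin m) (Fin m) ℝ) (hA : IsSignedAdj A) (i : Fin m) :
    (deg A i : ℝ) = ∑ j, |A i j| := by
  have : {j | A i j ≠ 0}.ncard = (Finset.univ.filter fun j => A i j ≠ 0).card := by
    rw [Set.ncard_eq_toFinset_card']
    congr 1
    ext j
    simp
  rw [deg, this]
  rw [Finset.card_filter]
  push_cast
  apply Finset.sum_congr rfl
  intro j _
  rcases hA.2.2 i j with h | h | h <;> simp [h]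
/-- for a signed graph without isolated vertices, every eigenvalue of the
normalized net-Laplacian lies in [-2, 2]. -/
theorem stmt15 (m : ℕ) (A : Matrix (Fin m) (Fin m) ℝ) (hA : IsSignedAdj A)
    (hiso : ∀ i, 1 ≤ deg A i) :
    ∀ μ : ℝ, (normNetLap A).charpoly.IsRoot μ → -2 ≤ μ ∧ μ ≤ 2 := by
  intro μ hroot
  have hdet : (μ • (1 : Matrix (Fin m) (Fin m) ℝ) - normNetLap A).det = 0 := by
    rw [← eval_charpoly_eq]; exact hroot
  obtain ⟨x, hx0, hx⟩ := (Matrix.exists_mulVec_eq_zero_iff).2 hdet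
  set f : Fin m → ℝ := fun i => (Real.sqrt (deg A i))⁻¹ with hf
  have hdpos : ∀ i, (0:ℝ) < (deg A i : ℝ) := by
    intro i; exact_mod_cast Nat.lt_of_lt_of_le Nat.zero_lt_one (hiso i)
  have hspos : ∀ i, 0 < Real.sqrt (deg A i) := fun i => Real.sqrt_pos.2 (hdpos i)
  have hfpos : ∀ i, 0 < f i := fun i => inv_pos.2 (hspos i)
  set y : Fin m → ℝ := fun j => f j * x j with hy
  -- eigen equation componentwise
  have heig : ∀ i, ∑ j, normNetLap A i j * x j = μ * x i := by
    intro i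
    have := congrFun hx i
    simp only [Matrix.sub_mulVec, Matrix.smul_mulVec, Matrix.one_mulVec,
      Pi.sub_apply, Pi.smul_apply, Pi.zero_apply, smul_eq_mul, sub_eq_zero] at this
    rw [Matrix.mulVec, dotProduct] at this
    linarith [this]
  have hNN : ∀ i j, normNetLap A i j = f i * netLap A i j * f j := by
    intro i j
    rw [normNetLap, Matrix.mul_diagonal, Matrix.diagonal_mul]
  -- key equation
  have key : ∀ i, μ * (deg A i : ℝ) * y i = (∑ k, A i k) * y i - ∑ j, A i j * y j := by
    intro i
    have h1 : f i * ∑ j, netLap A i j * y j = μ * x i := by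
      rw [Finset.mul_sum]
      rw [← heig i]
      apply Finset.sum_congr rfl
      intro j _
      rw [hNN i j]; ring
    have h2 : ∑ j, netLap A i j * y j = (∑ k, A i k) * y i - ∑ j, A i j * y j := by
      have hds : ∑ j, (Matrix.diagonal (fun i => ∑ k, A i k)) i j * y j
          = (∑ k, A i k) * y i := by
        rw [Finset.sum_eq_single i]
        · rw [Matrix.diagonal_apply_eq]
        · intro j _ hj; rw [Matrix.diagonal_apply_ne _ (Ne.symm hj), zero_mul]
        · intro h; exact absurd (Finset.mem_univ i) h
      calc ∑ j, netLap A i j * y j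
          = ∑ j, ((Matrix.diagonal (fun i => ∑ k, A i k)) i j * y j - A i j * y j) := by
            apply Finset.sum_congr rfl; intro j _
            rw [netLap, Matrix.sub_apply, sub_mul]
        _ = (∑ k, A i k) * y i - ∑ j, A i j * y j := by
            rw [Finset.sum_sub_distrib, hds]
    have h3 : μ * x i = μ * (deg A i : ℝ) * y i * f i := by
      have hsq : Real.sqrt (deg A i) * Real.sqrt (deg A i) = (deg A i : ℝ) :=
        Real.mul_self_sqrt (le_of_lt (hdpos i))
      have : (deg A i : ℝ) * f i * f i = 1 := by
        rw [hf]
        field_simp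
        rw [Real.sq_sqrt (le_of_lt (hdpos i))]
        exact div_self (ne_of_gt (hdpos i))
      calc μ * x i = μ * ((deg A i : ℝ) * f i * f i) * x i := by rw [this]; ring
        _ = μ * (deg A i : ℝ) * y i * f i := by rw [hy]; ring
    have hfne : f i ≠ 0 := ne_of_gt (hfpos i)
    have := h1
    rw [h2, h3] at this
    have := mul_right_cancel₀ hfne (by linarith [this] :
      ((∑ k, A i k) * y i - ∑ j, A i j * y j) * f i = μ * (deg A i : ℝ) * y i * f i)
    linarith [this]
  -- choose maximizing index
  obtain ⟨k, hk⟩ := Function.ne_iff.1 hx0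
  have hne : (Finset.univ : Finset (Fin m)).Nonempty := ⟨k, Finset.mem_univ k⟩
  obtain ⟨i, -, hi⟩ := Finset.exists_max_image Finset.univ (fun j => |y j|) hne
  have hyi : 0 < |y i| := by
    have : 0 < |y k| := by
      rw [hy]
      simp only [abs_mul]
      exact mul_pos (abs_pos.2 (ne_of_gt (hfpos k))) (abs_pos.2 hk)
    exact lt_of_lt_of_le this (hi k (Finset.mem_univ k))
  -- estimate
  have habs : |μ * (deg A i : ℝ) - (∑ k, A i k)| * |y i| ≤ (deg A i : ℝ) * |y i| := by
    have : (μ * (deg A i : ℝ) - (∑ k, A i k)) * y i = - ∑ j, A i j * y j := by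
      have := key i; ring_nf; ring_nf at this; linarith [this]
    calc |μ * (deg A i : ℝ) - (∑ k, A i k)| * |y i|
        = |(μ * (deg A i : ℝ) - (∑ k, A i k)) * y i| := (abs_mul _ _).symm
      _ = |∑ j, A i j * y j| := by rw [this, abs_neg]
      _ ≤ ∑ j, |A i j * y j| := Finset.abs_sum_le_sum_abs _ _
      _ ≤ ∑ j, |A i j| * |y i| := by
          apply Finset.sum_le_sum
          intro j _
          rw [abs_mul]
          exact mul_le_mul_of_nonneg_left (hi j (Finset.mem_univ j)) (abs_nonneg _)
      _ = (deg A i : ℝ) * |y i| := by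
          rw [← Finset.sum_mul, ← deg_eq_sum_abs A hA i]
  have h1 : |μ * (deg A i : ℝ) - (∑ k, A i k)| ≤ (deg A i : ℝ) :=
    le_of_mul_le_mul_right (by linarith [habs]) hyi
  have h2 : |(∑ k, A i k)| ≤ (deg A i : ℝ) := by
    calc |(∑ k, A i k)| ≤ ∑ k, |A i k| := Finset.abs_sum_le_sum_abs _ _
      _ = (deg A i : ℝ) := (deg_eq_sum_abs A hA i).symm
  have h3 : |μ| * (deg A i : ℝ) ≤ 2 * (deg A i : ℝ) := by
    calc |μ| * (deg A i : ℝ) = |μ * (deg A i : ℝ)| := by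
          rw [abs_mul, abs_of_pos (hdpos i)]
      _ ≤ |μ * (deg A i : ℝ) - (∑ k, A i k)| + |(∑ k, A i k)| := by
          have := abs_add_le (μ * (deg A i : ℝ) - (∑ k, A i k)) (∑ k, A i k)
          simpa using this
      _ ≤ 2 * (deg A i : ℝ) := by linarith
  have h4 : |μ| ≤ 2 := le_of_mul_le_mul_right (by linarith [h3]) (hdpos i)
  exact abs_le.1 h4
end
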